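/- Every type B partition d_B (an element of P_1(2n+1)) can be uniquely expressed as a concatenation of consecutive blocks, each of one of the following four types: type B1 blocks [a, a] with a odd; type B1* blocks [b, b] with b even; type B2 blocks [a_1, b_1, b_1, ..., b_k, b_k, a_2] with a_1, a_2 odd, all b_j even, a_1 > b_1 ≥ ... ≥ b_k > a_2, and k ≥ 0; type B3 blocks [a, b_1, b_1, ..., b_k, b_k] with a odd, all b_j even, a > b_1 ≥ ... ≥ b_k, k ≥ 0. Moreover, exactly one block of type B3 appears, and it is positioned at the end of the partition. -/

import Mathlib

/-- `[b₁, b₁, b₂, b₂, ...]`: each entry of `bs` doubled. -/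
def pairList (bs : List ℕ) : List ℕ := bs.flatMap fun b => [b, b]

/-- Type B1 block: `[a, a]` with `a` odd. -/
def IsB1 (T : List ℕ) : Prop := ∃ a, Odd a ∧ T = [a, a]

/-- Type B1* block: `[b, b]` with `b` even (and positive). -/
def IsB1s (T : List ℕ) : Prop := ∃ b, 0 < b ∧ Even b ∧ T = [b, b]

/-- Type B2 block: `[a₁, b₁², ..., b_k², a₂]` with `a₁, a₂` odd, all `b_j` even,
`a₁ > b₁ ≥ ... ≥ b_k > a₂` and `k ≥ 0`. -/
def IsB2 (T : List ℕ) : Prop :=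
  ∃ a₁ a₂ bs, Odd a₁ ∧ Odd a₂ ∧ a₂ < a₁ ∧
    (∀ b ∈ bs, Even b ∧ a₂ < b ∧ b < a₁) ∧ List.Pairwise (· ≥ ·) bs ∧
    T = a₁ :: (pairList bs ++ [a₂])

/-- Type B3 block: `[a, b₁², ..., b_k²]` with `a` odd, all `b_j` even (positive),
`a > b₁ ≥ ... ≥ b_k`, `k ≥ 0`. -/
def IsB3 (T : List ℕ) : Prop :=
  ∃ a bs, Odd a ∧ (∀ b ∈ bs, 0 < b ∧ Even b ∧ b < a) ∧ List.Pairwise (· ≥ ·) bs ∧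
    T = a :: pairList bs

/-- A type B partition of `N`, as a weakly decreasing list of positive integers summing
to `N` in which every even part occurs with even multiplicity. -/
def IsTypeBList (d : List ℕ) (N : ℕ) : Prop :=
  List.Pairwise (· ≥ ·) d ∧ (∀ x ∈ d, 0 < x) ∧ d.sum = N ∧
    ∀ i, Even i → Even (d.count i)

/-- `Ts` is a decomposition of `d` into consecutive blocks of types B1, B1*, B2, B3. -/
def IsBlockDecomp (d : List ℕ) (Ts : List (List ℕ)) : Prop :=
  d = Ts.flatten ∧ ∀ T ∈ Ts, IsB1 T ∨ IsB1s T ∨ IsB2 T ∨ IsB3 T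

/-- The block of type B3 appears exactly once, and at the end. -/
def B3AtEnd (Ts : List (List ℕ)) : Prop :=
  ∃ Ts' T, Ts = Ts' ++ [T] ∧ IsB3 T ∧ ∀ T' ∈ Ts', ¬ IsB3 T'

lemma pairList_cons (b : ℕ) (bs : List ℕ) : pairList (b :: bs) = b :: b :: pairList bs := rfl

lemma mem_pairList {x : ℕ} {bs : List ℕ} : x ∈ pairList bs ↔ x ∈ bs := by
  simp [pairList]

lemma pairList_sum (bs : List ℕ) : (pairList bs).sum = 2 * bs.sum := by
  induction bs with
  | nil => rfl
  | cons b bs ih => simp [pairList_cons, ih]; ring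

lemma pairList_count (i : ℕ) (bs : List ℕ) : (pairList bs).count i = 2 * bs.count i := by
  induction bs with
  | nil => rfl
  | cons b bs ih =>
    simp [pairList_cons, List.count_cons, ih]
    split <;> omega

lemma pairList_length (bs : List ℕ) : (pairList bs).length = 2 * bs.length := by
  induction bs with
  | nil => rfl
  | cons b bs ih => simp [pairList_cons, ih]; ring

lemma IsB1.not_isB3 {T : List ℕ} (h : IsB1 T) : ¬ IsB3 T := by
  obtain ⟨a, ha, rfl⟩ := h
  rintro ⟨a', bs, ha', hb, hs, heq⟩
  have h2 : ([a] : List ℕ).length = (pairList bs).length := by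
    have := congrArg List.tail heq; simpa using congrArg List.length this
  rw [pairList_length] at h2
  simp at h2; omega

lemma IsB1s.not_isB3 {T : List ℕ} (h : IsB1s T) : ¬ IsB3 T := by
  obtain ⟨b, hb0, hb, rfl⟩ := h
  rintro ⟨a', bs, ha', _, _, heq⟩
  have h1 : b = a' := by simpa using congrArg (·.headI) heq
  subst h1
  exact (Nat.not_even_iff_odd.mpr ha') hb

lemma IsB2.not_isB3 {T : List ℕ} (h : IsB2 T) : ¬ IsB3 T := by
  obtain ⟨a₁, a₂, bs, h1, h2, h3, h4, h5, rfl⟩ := h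
  rintro ⟨a', bs', ha', hb', _, heq⟩
  have htail : pairList bs ++ [a₂] = pairList bs' := by
    have := congrArg List.tail heq; simpa using this
  have : a₂ ∈ pairList bs' := by rw [← htail]; simp
  have := (hb' a₂ (mem_pairList.mp this)).2.1
  exact (Nat.not_even_iff_odd.mpr h2) this

lemma b3AtEnd_ne_nil {Ts : List (List ℕ)} (h : B3AtEnd Ts) : Ts ≠ [] := by
  obtain ⟨Ts', T, rfl, _, _⟩ := h; simp

lemma b3AtEnd_cons {T : List ℕ} {Ts : List (List ℕ)} (hT : ¬ IsB3 T) :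
    B3AtEnd (T :: Ts) ↔ B3AtEnd Ts := by
  constructor
  · rintro ⟨Ts', Tb, heq, hb3, hall⟩
    cases Ts' with
    | nil => simp at heq; exact absurd (heq.1 ▸ hb3) hT
    | cons U Ts'' =>
      simp at heq
      exact ⟨Ts'', Tb, heq.2, hb3, fun T' hT' => hall T' (by simp [heq.1, hT'])⟩
  · rintro ⟨Ts', Tb, rfl, hb3, hall⟩
    exact ⟨T :: Ts', Tb, by simp, hb3, by
      rintro T' hT'
      rcases List.mem_cons.mp hT' with rfl | h
      · exact hT
      · exact hall _ h⟩

lemma b3AtEnd_head_b3 {T : List ℕ} {Ts : List (List ℕ)} (h : B3AtEnd (T :: Ts))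
    (hT : IsB3 T) : Ts = [] := by
  obtain ⟨Ts', Tb, heq, hb3, hall⟩ := h
  cases Ts' with
  | nil => simp at heq; exact heq.2
  | cons U Ts'' =>
    simp at heq
    exact absurd (heq.1 ▸ hT) (hall U (by simp))

lemma split_first_odd : ∀ l : List ℕ, (∃ y ∈ l, Odd y) →
    ∃ p a q, l = p ++ a :: q ∧ (∀ e ∈ p, Even e) ∧ Odd a := by
  intro l
  induction l with
  | nil => rintro ⟨y, hy, _⟩; simp at hy
  | cons x l ih =>
    rintro ⟨y, hy, hyo⟩
    by_cases hx : Odd x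
    · exact ⟨[], x, l, by simp, by simp, hx⟩
    · rcases List.mem_cons.mp hy with rfl | hy'
      · exact absurd hyo hx
      · obtain ⟨p, a, q, rfl, hp, ha⟩ := ih ⟨y, hy', hyo⟩
        exact ⟨x :: p, a, q, by simp, by
          rintro e he
          rcases List.mem_cons.mp he with rfl | h
          · exact Nat.not_odd_iff_even.mp hx
          · exact hp _ h, ha⟩

lemma split_unique : ∀ (p p' : List ℕ) (a a' : ℕ) (q q' : List ℕ),
    p ++ a :: q = p' ++ a' :: q' → (∀ e ∈ p, Even e) → (∀ e ∈ p', Even e) →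
    Odd a → Odd a' → p = p' ∧ a = a' ∧ q = q' := by
  intro p
  induction p with
  | nil =>
    intro p' a a' q q' heq _ hp' ha ha'
    cases p' with
    | nil => simp_all
    | cons x p' =>
      simp at heq
      exact absurd (heq.1 ▸ ha) (Nat.not_odd_iff_even.mpr (hp' x (by simp)))
  | cons x p ih =>
    intro p' a a' q q' heq hp hp' ha ha'
    cases p' with
    | nil =>
      simp at heq
      exact absurd (heq.1 ▸ ha') (Nat.not_odd_iff_even.mpr (hp x (by simp)))
    | cons x' p' =>
      simp at heq
      obtain ⟨h1, h2, h3⟩ := ih p' a a' q q' heq.2 (fun e he => hp e (by simp [he]))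
        (fun e he => hp' e (by simp [he])) ha ha'
      exact ⟨by simp [heq.1, h1], h2, h3⟩

lemma pair_extract : ∀ (n : ℕ) (l : List ℕ), l.length ≤ n → l.Pairwise (· ≥ ·) →
    (∀ i, Even (l.count i)) →
    ∃ bs, bs.Pairwise (· ≥ ·) ∧ (∀ b ∈ bs, b ∈ l) ∧ l = pairList bs := by
  intro n
  induction n with
  | zero =>
    intro l hl _ _
    have : l = [] := List.length_eq_zero_iff.mp (Nat.le_zero.mp hl)
    exact ⟨[], by simp, by simp, by simp [this, pairList]⟩
  | succ n ih =>
    intro l hl hs hc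
    cases l with
    | nil => exact ⟨[], by simp, by simp, by simp [pairList]⟩
    | cons x l' =>
      have hcx := hc x
      rw [List.count_cons_self] at hcx
      have hx' : x ∈ l' := by
        rcases Nat.even_or_odd (l'.count x) with h | h
        · exfalso; rcases h with ⟨k, hk⟩; rcases hcx with ⟨m, hm⟩; omega
        · exact List.count_pos_iff.mp (by rcases h with ⟨k,hk⟩; omega)
      cases l' with
      | nil => simp at hx'
      | cons y l'' =>
        have hsy : x ≥ y := (List.pairwise_cons.mp hs).1 y (by simp)
        have hyx : y = x := by
          rcases List.mem_cons.mp hx' with rfl | h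
          · rfl
          · exact le_antisymm hsy ((List.pairwise_cons.mp (List.pairwise_cons.mp hs).2).1 x h)
        subst hyx
        have hs'' : l''.Pairwise (· ≥ ·) := (List.pairwise_cons.mp (List.pairwise_cons.mp hs).2).2
        have hc'' : ∀ i, Even (l''.count i) := by
          intro i
          have := hc i
          simp [List.count_cons] at this
          rcases this with ⟨k, hk⟩
          split at hk <;> [exact ⟨k-1, by omega⟩; exact ⟨k, hk⟩]
        have hlen : l''.length ≤ n := by simp at hl; omega
        obtain ⟨bs, hbs1, hbs2, hbs3⟩ := ih l'' hlen hs'' hc''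
        refine ⟨y :: bs, ?_, ?_, by simp [pairList_cons, hbs3]⟩
        · rw [List.pairwise_cons]
          refine ⟨fun b hb => ?_, hbs1⟩
          exact (List.pairwise_cons.mp hs).1 b (by simp [hbs2 b hb])
        · intro b hb
          rcases List.mem_cons.mp hb with rfl | h
          · simp
          · simp [hbs2 b h]

lemma keyAux : ∀ (n : ℕ) (d : List ℕ), d.length ≤ n → d.Pairwise (· ≥ ·) →
    (∀ x ∈ d, 0 < x) → Odd d.sum → (∀ i, Even i → Even (d.count i)) →
    ∃! Ts, IsBlockDecomp d Ts ∧ B3AtEnd Ts := by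
  intro n
  induction n with
  | zero =>
    intro d hl _ _ hsum _
    have : d = [] := List.length_eq_zero_iff.mp (Nat.le_zero.mp hl)
    subst this
    simp [Nat.odd_iff] at hsum
  | succ n ih =>
    intro d hl hsort hpos hsum hcount
    cases d with
    | nil => simp [Nat.odd_iff] at hsum
    | cons x rest =>
      have hxrest : ∀ e ∈ rest, e ≤ x := fun e he => (List.pairwise_cons.mp hsort).1 e he
      have hsrest : rest.Pairwise (· ≥ ·) := (List.pairwise_cons.mp hsort).2
      by_cases hx : Odd x
      · by_cases hodd : ∃ y ∈ rest, Odd y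
        · -- first block is B1 or B2
          obtain ⟨p, o, q, hrest, hpEven, hoOdd⟩ := split_first_odd rest hodd
          have hpo : ∀ e ∈ p, o ≤ e := by
            intro e he
            have hs2 := hsrest
            rw [hrest] at hs2
            exact (List.pairwise_append.mp hs2).2.2 e he o (by simp)
          have hoq : ∀ z ∈ q, z ≤ o := by
            intro z hz
            have hs2 := hsrest
            rw [hrest] at hs2
            have := (List.pairwise_append.mp hs2).2.1
            exact (List.pairwise_cons.mp this).1 z hz
          have hprange : ∀ e ∈ p, o < e ∧ e < x := by
            intro e he
            have hee : Even e := hpEven e he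
            have h1 : e ≤ x := hxrest e (by rw [hrest]; simp [he])
            have h2 : o ≤ e := hpo e he
            have hne1 : e ≠ x := by rintro rfl; exact (Nat.not_odd_iff_even.mpr hee) hx
            have hne2 : e ≠ o := by rintro rfl; exact (Nat.not_odd_iff_even.mpr hee) hoOdd
            exact ⟨lt_of_le_of_ne h2 (Ne.symm hne2), lt_of_le_of_ne h1 hne1⟩
          have hcp : ∀ i, Even (p.count i) := by
            intro i
            by_cases hip : i ∈ p
            · have hie : Even i := hpEven i hip
              have hd := hcount i hie
              have hxne : i ≠ x := by rintro rfl; exact (Nat.not_odd_iff_even.mpr hie) hx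
              have hone : i ≠ o := by rintro rfl; exact (Nat.not_odd_iff_even.mpr hie) hoOdd
              have hqz : q.count i = 0 := by
                rw [List.count_eq_zero]
                intro hiq
                have h3 := hoq i hiq
                have h4 := (hprange i hip).1
                omega
              have heq : (x :: rest).count i = p.count i := by
                rw [List.count_cons_of_ne (Ne.symm hxne), hrest, List.count_append,
                  List.count_cons_of_ne (Ne.symm hone), hqz]
                omega
              rwa [heq] at hd
            · simp [List.count_eq_zero.mpr hip]
          obtain ⟨bs, hbs1, hbs2, hbs3⟩ := pair_extract p.length p le_rfl
            (by rw [hrest] at hsrest; exact (List.pairwise_append.mp hsrest).1) hcp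
          set T0 : List ℕ := x :: (p ++ [o]) with hT0
          have hT0blk : IsB1 T0 ∨ IsB2 T0 := by
            by_cases hox : o = x
            · left
              have hpnil : p = [] := by
                cases p with
                | nil => rfl
                | cons e p' =>
                  have := hprange e (by simp)
                  omega
              exact ⟨x, hx, by simp [hT0, hpnil, hox]⟩
            · right
              refine ⟨x, o, bs, hx, hoOdd, ?_, ?_, hbs1, ?_⟩
              · have h1 : o ≤ x := hxrest o (by rw [hrest]; simp)
                exact lt_of_le_of_ne h1 hox
              · intro b hb
                have hbp := hbs2 b hb
                exact ⟨hpEven b hbp, (hprange b hbp).1, (hprange b hbp).2⟩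
              · rw [hT0, hbs3]
          have hT0n3 : ¬ IsB3 T0 := by
            rcases hT0blk with h | h
            · exact h.not_isB3
            · exact h.not_isB3
          have hdT0 : x :: rest = T0 ++ q := by rw [hT0, hrest]; simp
          have hq_sorted : q.Pairwise (· ≥ ·) := by
            rw [hrest] at hsrest
            have := (List.pairwise_append.mp hsrest).2.1
            exact (List.pairwise_cons.mp this).2
          have hq_pos : ∀ z ∈ q, 0 < z := by
            intro z hz; exact hpos z (by rw [hrest]; simp [hz])
          have hq_sum : Odd q.sum := by
            have h1 : (x :: rest).sum = x + (p.sum + (o + q.sum)) := by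
              rw [hrest]; simp
            have h2 : p.sum = 2 * bs.sum := by rw [hbs3, pairList_sum]
            rw [Nat.odd_iff] at hsum hx hoOdd ⊢
            omega
          have hq_count : ∀ i, Even i → Even (q.count i) := by
            intro i hie
            have hd := hcount i hie
            have hxne : i ≠ x := by rintro rfl; exact (Nat.not_odd_iff_even.mpr hie) hx
            have hone : i ≠ o := by rintro rfl; exact (Nat.not_odd_iff_even.mpr hie) hoOdd
            have h1 : (x :: rest).count i = p.count i + q.count i := by
              rw [List.count_cons_of_ne (Ne.symm hxne), hrest, List.count_append,
                List.count_cons_of_ne (Ne.symm hone)]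
            have h2 := hcp i
            rw [h1] at hd
            rw [Nat.even_iff] at hd h2 ⊢
            omega
          have hq_len : q.length ≤ n := by
            have h1 : (x :: rest).length = 1 + (p.length + (1 + q.length)) := by
              rw [hrest]; simp; omega
            rw [h1] at hl
            omega
          obtain ⟨Ts2, ⟨⟨hTs2f, hTs2b⟩, hTs2e⟩, hTs2u⟩ :=
            ih q hq_len hq_sorted hq_pos hq_sum hq_count
          refine ⟨T0 :: Ts2, ⟨⟨?_, ?_⟩, ?_⟩, ?_⟩
          · rw [List.flatten_cons, ← hTs2f, ← hdT0]
          · intro T hT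
            rcases List.mem_cons.mp hT with rfl | h
            · rcases hT0blk with h | h
              · exact Or.inl h
              · exact Or.inr (Or.inr (Or.inl h))
            · exact hTs2b T h
          · exact (b3AtEnd_cons hT0n3).mpr hTs2e
          · rintro Ts ⟨⟨hflat, hblocks⟩, hb3⟩
            cases Ts with
            | nil => exact absurd rfl (b3AtEnd_ne_nil hb3)
            | cons T0' TsR =>
              have hT0'blk := hblocks T0' (by simp)
              have hflat' : x :: rest = T0' ++ TsR.flatten := by
                rw [hflat]; simp
              have hmain : T0' = T0 ∧ TsR.flatten = q := by
                rcases hT0'blk with hB | hB | hB | hB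
                · obtain ⟨a, haO, rfl⟩ := hB
                  simp at hflat'
                  obtain ⟨rfl, hr⟩ := hflat'
                  have := split_unique p [] o x q TsR.flatten
                    (by rw [← hrest, hr]; simp) hpEven (by simp) hoOdd haO
                  obtain ⟨hp0, ho2, hq0⟩ := this
                  exact ⟨by simp [hT0, hp0, ho2], hq0.symm⟩
                · obtain ⟨b, _, hbE, rfl⟩ := hB
                  simp at hflat'
                  obtain ⟨rfl, _⟩ := hflat'
                  exact absurd hbE (Nat.not_even_iff_odd.mpr hx)
                · obtain ⟨a₁, a₂, bs', h1, h2, h3, h4, h5, rfl⟩ := hB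
                  simp at hflat'
                  obtain ⟨rfl, hr⟩ := hflat'
                  have := split_unique p (pairList bs') o a₂ q TsR.flatten
                    (by rw [← hrest, hr])
                    hpEven (fun e he => (h4 e (mem_pairList.mp he)).1) hoOdd h2
                  obtain ⟨hp0, ho2, hq0⟩ := this
                  exact ⟨by simp [hT0, hp0, ho2], hq0.symm⟩
                · exfalso
                  have hTsR : TsR = [] := b3AtEnd_head_b3 hb3 hB
                  obtain ⟨a, bs', haO, hb', _, hTeq⟩ := hB
                  subst hTsR
                  simp at hflat'
                  rw [hTeq] at hflat'
                  simp at hflat'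
                  have ho2 : o ∈ pairList bs' := by
                    rw [← hflat'.2, hrest]; simp
                  have := (hb' o (mem_pairList.mp ho2)).2.1
                  exact absurd this (Nat.not_even_iff_odd.mpr hoOdd)
              obtain ⟨rfl, hfq⟩ := hmain
              have hTsR_dec : IsBlockDecomp q TsR :=
                ⟨hfq.symm, fun T hT => hblocks T (by simp [hT])⟩
              have hTsR_e : B3AtEnd TsR := (b3AtEnd_cons hT0n3).mp hb3
              rw [hTs2u TsR ⟨hTsR_dec, hTsR_e⟩]
        · -- the whole of d is a single B3 block
          push_neg at hodd
          have hev : ∀ y ∈ rest, Even y := fun y hy => Nat.not_odd_iff_even.mp (hodd y hy)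
          have hcrest : ∀ i, Even (rest.count i) := by
            intro i
            by_cases hie : Even i
            · have hd := hcount i hie
              have hxne : i ≠ x := by rintro rfl; exact (Nat.not_odd_iff_even.mpr hie) hx
              rwa [List.count_cons_of_ne (Ne.symm hxne)] at hd
            · have : i ∉ rest := fun h => hie (hev i h)
              simp [List.count_eq_zero.mpr this]
          obtain ⟨bs, hbs1, hbs2, hbs3⟩ := pair_extract rest.length rest le_rfl hsrest hcrest
          have hB3 : IsB3 (x :: rest) := by
            refine ⟨x, bs, hx, ?_, hbs1, by rw [hbs3]⟩
            intro b hb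
            have hbr := hbs2 b hb
            have h1 : b ≤ x := hxrest b hbr
            have hne : b ≠ x := by
              rintro rfl; exact (Nat.not_odd_iff_even.mpr (hev b hbr)) hx
            exact ⟨hpos b (by simp [hbr]), hev b hbr, lt_of_le_of_ne h1 hne⟩
          refine ⟨[x :: rest], ⟨⟨by simp, ?_⟩, ⟨[], x :: rest, by simp, hB3, by simp⟩⟩, ?_⟩
          · intro T hT
            simp at hT
            subst hT
            exact Or.inr (Or.inr (Or.inr hB3))
          · rintro Ts ⟨⟨hflat, hblocks⟩, hb3⟩
            cases Ts with
            | nil => exact absurd rfl (b3AtEnd_ne_nil hb3)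
            | cons T0' TsR =>
              have hT0'blk := hblocks T0' (by simp)
              have hflat' : x :: rest = T0' ++ TsR.flatten := by rw [hflat]; simp
              rcases hT0'blk with hB | hB | hB | hB
              · obtain ⟨a, haO, rfl⟩ := hB
                simp at hflat'
                obtain ⟨rfl, hr⟩ := hflat'
                exact absurd haO (Nat.not_odd_iff_even.mpr (hev x (by rw [hr]; simp)))
              · obtain ⟨b, _, hbE, rfl⟩ := hB
                simp at hflat'
                obtain ⟨rfl, _⟩ := hflat'
                exact absurd hbE (Nat.not_even_iff_odd.mpr hx)
              · obtain ⟨a₁, a₂, bs', h1, h2, h3, h4, h5, rfl⟩ := hB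
                simp at hflat'
                obtain ⟨rfl, hr⟩ := hflat'
                have : a₂ ∈ rest := by rw [hr]; simp
                exact absurd h2 (Nat.not_odd_iff_even.mpr (hev a₂ this))
              · have hTsR : TsR = [] := b3AtEnd_head_b3 hb3 hB
                subst hTsR
                simp at hflat' ⊢
                exact hflat'.symm
      · -- head even: first block is B1*
        have hxE : Even x := Nat.not_odd_iff_even.mp hx
        have hx0 : 0 < x := hpos x (by simp)
        have hcx := hcount x hxE
        rw [List.count_cons_self] at hcx
        have hxr : x ∈ rest := by
          rcases Nat.even_or_odd (rest.count x) with h | h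
          · exfalso; rcases h with ⟨k, hk⟩; rcases hcx with ⟨m, hm⟩; omega
          · exact List.count_pos_iff.mp (by rcases h with ⟨k,hk⟩; omega)
        obtain ⟨rest', hrest'⟩ : ∃ rest', rest = x :: rest' := by
          cases rest with
          | nil => simp at hxr
          | cons y rest' =>
            have hsy : x ≥ y := hxrest y (by simp)
            have : y = x := by
              rcases List.mem_cons.mp hxr with rfl | h
              · rfl
              · exact le_antisymm hsy ((List.pairwise_cons.mp hsrest).1 x h)
            exact ⟨rest', by rw [this]⟩
        subst hrest'
        have hs' : rest'.Pairwise (· ≥ ·) := (List.pairwise_cons.mp hsrest).2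
        have hp' : ∀ z ∈ rest', 0 < z := fun z hz => hpos z (by simp [hz])
        have hsum' : Odd rest'.sum := by
          rw [Nat.odd_iff] at hsum ⊢
          rw [Nat.even_iff] at hxE
          simp at hsum
          omega
        have hc' : ∀ i, Even i → Even (rest'.count i) := by
          intro i hie
          have hd := hcount i hie
          by_cases hix : i = x
          · subst hix
            simp [List.count_cons_self] at hd
            rw [Nat.even_iff] at hd ⊢
            omega
          · rwa [List.count_cons_of_ne (Ne.symm hix), List.count_cons_of_ne (Ne.symm hix)] at hd
        have hl' : rest'.length ≤ n := by simp at hl; omega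
        obtain ⟨Ts2, ⟨⟨hTs2f, hTs2b⟩, hTs2e⟩, hTs2u⟩ := ih rest' hl' hs' hp' hsum' hc'
        have hB1s : IsB1s [x, x] := ⟨x, hx0, hxE, rfl⟩
        have hn3 : ¬ IsB3 [x, x] := hB1s.not_isB3
        refine ⟨[x, x] :: Ts2, ⟨⟨?_, ?_⟩, ?_⟩, ?_⟩
        · rw [List.flatten_cons, ← hTs2f]; rfl
        · intro T hT
          rcases List.mem_cons.mp hT with rfl | h
          · exact Or.inr (Or.inl hB1s)
          · exact hTs2b T h
        · exact (b3AtEnd_cons hn3).mpr hTs2e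
        · rintro Ts ⟨⟨hflat, hblocks⟩, hb3⟩
          cases Ts with
          | nil => exact absurd rfl (b3AtEnd_ne_nil hb3)
          | cons T0' TsR =>
            have hT0'blk := hblocks T0' (by simp)
            have hflat' : x :: x :: rest' = T0' ++ TsR.flatten := by rw [hflat]; simp
            have hmain : T0' = [x, x] ∧ TsR.flatten = rest' := by
              rcases hT0'blk with hB | hB | hB | hB
              · obtain ⟨a, haO, rfl⟩ := hB
                simp at hflat'
                exact absurd (hflat'.1 ▸ haO) hx
              · obtain ⟨b, _, _, rfl⟩ := hB
                simp at hflat'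
                obtain ⟨h1, h2⟩ := hflat'
                constructor
                · rw [h1]
                · rw [← h2]
              · obtain ⟨a₁, a₂, bs', h1, h2, h3, h4, h5, rfl⟩ := hB
                simp at hflat'
                exact absurd (hflat'.1 ▸ h1) hx
              · obtain ⟨a, bs', haO, _, _, hTeq⟩ := hB
                rw [hTeq] at hflat'
                simp at hflat'
                exact absurd (hflat'.1 ▸ haO) hx
            obtain ⟨rfl, hfq⟩ := hmain
            have hTsR_dec : IsBlockDecomp rest' TsR :=
              ⟨hfq.symm, fun T hT => hblocks T (by simp [hT])⟩
            have hTsR_e : B3AtEnd TsR := (b3AtEnd_cons hn3).mp hb3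
            rw [hTs2u TsR ⟨hTsR_dec, hTsR_e⟩]

/-- every type B partition of `2n+1` admits a unique decomposition into
consecutive blocks of types B1, B1*, B2, B3, with the (unique) B3 block at the end. -/
theorem stmt8 (n : ℕ) (d : List ℕ) (hd : IsTypeBList d (2 * n + 1)) :
    ∃! Ts : List (List ℕ), IsBlockDecomp d Ts ∧ B3AtEnd Ts := by
  obtain ⟨hsort, hpos, hsum, hcount⟩ := hd
  exact keyAux d.length d le_rfl hsort hpos (by rw [hsum]; exact ⟨n, rfl⟩) hcount
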